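/- Let f : ℤ → ℕ ∪ {∞} be any function such that f⁻¹(0) is a finite set, and let φ : ℕ → ℝ be any nonnegative function such that φ(x) → ∞ as x → ∞. Then there exist uncountably many asymptotic bases A of the integers such that r_A(n) = f(n) for all integers n and A(-x, x) ≤ φ(x) for all x ≥ 0. -/

import Mathlib

/-- The representation function of a set `A` of integers:
`r_A(n) = card {(a,b) : a, b ∈ A, a ≤ b, a + b = n}`, valued in `ℕ∞`. -/
noncomputable def repFn (A : Set ℤ) (n : ℤ) : ℕ∞ :=
  {p : ℤ × ℤ | p.1 ∈ A ∧ p.2 ∈ A ∧ p.1 ≤ p.2 ∧ p.1 + p.2 = n}.encard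

/-- The counting function of a set `A` of integers:
`A(y, x) = card {a ∈ A : y ≤ a ≤ x}`. -/
noncomputable def countFn (A : Set ℤ) (y x : ℝ) : ℕ :=
  {a : ℤ | a ∈ A ∧ y ≤ (a : ℝ) ∧ (a : ℝ) ≤ x}.ncard


/-- finite-stage pair set -/
def pairsF (A : Finset ℤ) (n : ℤ) : Finset (ℤ × ℤ) :=
  (A ×ˢ A).filter fun p => p.1 ≤ p.2 ∧ p.1 + p.2 = n

def rB (A : Finset ℤ) (n : ℤ) : ℕ := (pairsF A n).card

def eB (A : Finset ℤ) : ℕ := A.sup Int.natAbs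

lemma eB_le {A : Finset ℤ} {a : ℤ} (h : a ∈ A) : a.natAbs ≤ eB A :=
  Finset.le_sup h

lemma mem_pairsF {A : Finset ℤ} {n : ℤ} {p : ℤ × ℤ} :
    p ∈ pairsF A n ↔ p.1 ∈ A ∧ p.2 ∈ A ∧ p.1 ≤ p.2 ∧ p.1 + p.2 = n := by
  simp [pairsF, Finset.mem_filter, Finset.mem_product, and_assoc]

lemma pairsF_mono {A B : Finset ℤ} (h : A ⊆ B) (n : ℤ) : pairsF A n ⊆ pairsF B n := by
  intro p hp
  rw [mem_pairsF] at hp ⊢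
  exact ⟨h hp.1, h hp.2.1, hp.2.2⟩

section core

variable {Z M : ℕ} {A : Finset ℤ} {n x y : ℤ}
  (hM : 3 * eB A + Z + n.natAbs + 2 ≤ M)
  (hx1 : x ≤ -(M : ℤ) - n.natAbs) (hx2 : -(M : ℤ) - n.natAbs - 1 ≤ x)
  (hy : y = n - x)

include hM hx1 hx2 hy

lemma mem_pairsF_insert {m : ℤ} {p : ℤ × ℤ}
    (hp : p ∈ pairsF (insert x (insert y A)) m) :
    p ∈ pairsF A m ∨ p = (x, x) ∨ p = (x, y) ∨ p = (y, y) ∨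
      (∃ a ∈ A, p = (x, a)) ∨ (∃ a ∈ A, p = (a, y)) := by
  rw [mem_pairsF] at hp
  obtain ⟨h1, h2, hle, hsum⟩ := hp
  simp only [Finset.mem_insert] at h1 h2
  obtain ⟨p1, p2⟩ := p
  simp only at h1 h2 hle hsum ⊢
  rcases h1 with h1 | h1 | h1 <;> rcases h2 with h2 | h2 | h2
  · exact Or.inr (Or.inl (by simp [h1, h2]))
  · exact Or.inr (Or.inr (Or.inl (by simp [h1, h2])))
  · exact Or.inr (Or.inr (Or.inr (Or.inr (Or.inl ⟨p2, h2, by simp [h1]⟩))))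
  · exfalso; have := eB_le (A := A) (a := p2); subst h1 h2; omega
  · exact Or.inr (Or.inr (Or.inr (Or.inl (by simp [h1, h2]))))
  · exfalso; have := eB_le h2; subst h1; omega
  · exfalso; have := eB_le h1; subst h2; omega
  · exact Or.inr (Or.inr (Or.inr (Or.inr (Or.inr ⟨p1, h1, by simp [h2]⟩))))
  · exact Or.inl (mem_pairsF.mpr ⟨h1, h2, hle, hsum⟩)

lemma x_not_mem : x ∉ A := fun h => by have := eB_le h; omega

lemma y_not_mem : y ∉ A := fun h => by have := eB_le h; omega

lemma pairsF_insert_self :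
    pairsF (insert x (insert y A)) n = insert (x, y) (pairsF A n) := by
  ext p
  constructor
  · intro hp
    have hsum : p.1 + p.2 = n := (mem_pairsF.mp hp).2.2.2
    rcases mem_pairsF_insert hM hx1 hx2 hy hp with h | h | h | h | ⟨a, ha, h⟩ | ⟨a, ha, h⟩
    · exact Finset.mem_insert_of_mem h
    · exfalso; subst h; simp at hsum; omega
    · subst h; exact Finset.mem_insert_self _ _
    · exfalso; subst h; simp at hsum; omega
    · exfalso; have := eB_le ha; subst h; simp at hsum; omega
    · exfalso; have := eB_le ha; subst h; simp at hsum; omega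
  · intro hp
    rcases Finset.mem_insert.mp hp with h | h
    · subst h
      rw [mem_pairsF]
      refine ⟨Finset.mem_insert_self _ _,
        Finset.mem_insert_of_mem (Finset.mem_insert_self _ _), by omega, by omega⟩
    · exact pairsF_mono (fun a ha => Finset.mem_insert_of_mem (Finset.mem_insert_of_mem ha)) n h

lemma rB_insert_self : rB (insert x (insert y A)) n = rB A n + 1 := by
  rw [rB, rB, pairsF_insert_self hM hx1 hx2 hy,
    Finset.card_insert_of_notMem]
  intro h
  exact x_not_mem hM hx1 hx2 hy (mem_pairsF.mp h).1

omit hM hx1 hx2 hy in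
lemma newforms_eq (hM : 3 * eB A + Z + n.natAbs + 2 ≤ M)
    (hx1 : x ≤ -(M : ℤ) - n.natAbs) (hx2 : -(M : ℤ) - n.natAbs - 1 ≤ x)
    (hy : y = n - x) {m : ℤ} {p q : ℤ × ℤ}
    (hp : p = (x, x) ∨ p = (y, y) ∨ (∃ a ∈ A, p = (x, a)) ∨ (∃ a ∈ A, p = (a, y)))
    (hq : q = (x, x) ∨ q = (y, y) ∨ (∃ a ∈ A, q = (x, a)) ∨ (∃ a ∈ A, q = (a, y)))
    (hps : p.1 + p.2 = m) (hqs : q.1 + q.2 = m) : p = q := by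
  rcases hp with rfl | rfl | ⟨a, ha, rfl⟩ | ⟨a, ha, rfl⟩ <;>
    rcases hq with rfl | rfl | ⟨a', ha', rfl⟩ | ⟨a', ha', rfl⟩ <;>
    dsimp only at hps hqs <;>
    simp only [Prod.mk.injEq, eq_self_iff_true, true_and, and_true] <;>
    (try have hA1 := eB_le ha) <;> (try have hA2 := eB_le ha') <;>
    omega

lemma pairsF_insert_ne {m : ℤ} (hm : m ≠ n) :
    pairsF (insert x (insert y A)) m = pairsF A m ∨
      ((pairsF (insert x (insert y A)) m).card ≤ 1 ∧ Z < m.natAbs) := by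
  by_cases hs : m = x + x ∨ m = y + y ∨ (∃ a ∈ A, m = x + a) ∨ (∃ a ∈ A, m = a + y)
  · right
    constructor
    · rw [Finset.card_le_one]
      have hcl : ∀ p ∈ pairsF (insert x (insert y A)) m,
          p = (x, x) ∨ p = (y, y) ∨ (∃ a ∈ A, p = (x, a)) ∨ (∃ a ∈ A, p = (a, y)) := by
        intro p hp
        have hsum : p.1 + p.2 = n → False := fun h => by
          have : p.1 + p.2 = m := (mem_pairsF.mp hp).2.2.2
          exact hm (by omega)
        rcases mem_pairsF_insert hM hx1 hx2 hy hp with h | h | h | h | h | h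
        · exfalso
          have h1 := eB_le (mem_pairsF.mp h).1
          have h2 := eB_le (mem_pairsF.mp h).2.1
          have h3 := (mem_pairsF.mp h).2.2.2
          rcases hs with h' | h' | ⟨a, ha, h'⟩ | ⟨a, ha, h'⟩ <;>
            [skip; skip; (have := eB_le ha); (have := eB_le ha)] <;> omega
        · exact Or.inl h
        · exact absurd (by subst h; simpa using hy ▸ (by omega : x + y = n)) hsum
        · exact Or.inr (Or.inl h)
        · exact Or.inr (Or.inr (Or.inl h))
        · exact Or.inr (Or.inr (Or.inr h))
      intro p hp q hq
      exact newforms_eq hM hx1 hx2 hy (hcl p hp) (hcl q hq)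
        (mem_pairsF.mp hp).2.2.2 (mem_pairsF.mp hq).2.2.2
    · rcases hs with h | h | ⟨a, ha, h⟩ | ⟨a, ha, h⟩ <;>
        [skip; skip; (have := eB_le ha); (have := eB_le ha)] <;> omega
  · left
    ext p
    constructor
    · intro hp
      have hsum : p.1 + p.2 = m := (mem_pairsF.mp hp).2.2.2
      rcases mem_pairsF_insert hM hx1 hx2 hy hp with h | h | h | h | ⟨a, ha, h⟩ | ⟨a, ha, h⟩
      · exact h
      · exfalso; subst h; exact hs (Or.inl (by simpa using hsum.symm))
      · exfalso; subst h; simp at hsum; exact hm (by omega)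
      · exfalso; subst h; exact hs (Or.inr (Or.inl (by simpa using hsum.symm)))
      · exfalso; subst h; exact hs (Or.inr (Or.inr (Or.inl ⟨a, ha, by simpa using hsum.symm⟩)))
      · exfalso; subst h; exact hs (Or.inr (Or.inr (Or.inr ⟨a, ha, by simpa using hsum.symm⟩)))
    · exact fun hp => pairsF_mono
        (fun a ha => Finset.mem_insert_of_mem (Finset.mem_insert_of_mem ha)) m hp

lemma new_elt_bound {a : ℤ} (ha : a = x ∨ a = y) (hb : ∀ c ∈ A, c.natAbs ≤ eB A) :
    M ≤ a.natAbs ∧ ∀ c ∈ A, 3 * c.natAbs + 2 ≤ a.natAbs := by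
  constructor
  · rcases ha with h | h <;> subst h <;> omega
  · intro c hc
    have := hb c hc
    rcases ha with h | h <;> subst h <;> omega

end core


def Mb (Z : ℕ) (s : ℕ → ℕ) (k : ℕ) (A : Finset ℤ) (n : ℤ) : ℕ :=
  3 * eB A + Z + n.natAbs + s k + 2

def xv (Z : ℕ) (s : ℕ → ℕ) (k : ℕ) (A : Finset ℤ) (n : ℤ) (b : Bool) : ℤ :=
  -((Mb Z s k A n + n.natAbs : ℕ) : ℤ) - (bif b then 1 else 0)


def run (f : ℤ → ℕ∞) (Z : ℕ) (s : ℕ → ℕ) (e : ℕ → ℤ) (g : ℕ → Bool) :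
    ℕ → Finset ℤ × ℕ
  | 0 => (∅, 0)
  | k + 1 =>
    if (rB (run f Z s e g k).1 (e k) : ℕ∞) < f (e k) then
      (insert (xv Z s k (run f Z s e g k).1 (e k) (g (run f Z s e g k).2))
        (insert (e k - xv Z s k (run f Z s e g k).1 (e k) (g (run f Z s e g k).2))
          (run f Z s e g k).1),
       (run f Z s e g k).2 + 1)
    else run f Z s e g k

variable (f : ℤ → ℕ∞) (Z : ℕ) (s : ℕ → ℕ) (e : ℕ → ℤ) (g : ℕ → Bool)

lemma run_succ_active {k : ℕ}
    (h : (rB (run f Z s e g k).1 (e k) : ℕ∞) < f (e k)) :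
    run f Z s e g (k + 1) =
      (insert (xv Z s k (run f Z s e g k).1 (e k) (g (run f Z s e g k).2))
        (insert (e k - xv Z s k (run f Z s e g k).1 (e k) (g (run f Z s e g k).2))
          (run f Z s e g k).1),
       (run f Z s e g k).2 + 1) := by
  rw [run, if_pos h]

lemma run_succ_not {k : ℕ}
    (h : ¬ (rB (run f Z s e g k).1 (e k) : ℕ∞) < f (e k)) :
    run f Z s e g (k + 1) = run f Z s e g k := by
  rw [run, if_neg h]

lemma xv_le (k : ℕ) (A : Finset ℤ) (n : ℤ) (b : Bool) :
    xv Z s k A n b ≤ -(Mb Z s k A n : ℤ) - n.natAbs := by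
  cases b <;> simp [xv] <;> omega

lemma xv_ge (k : ℕ) (A : Finset ℤ) (n : ℤ) (b : Bool) :
    -(Mb Z s k A n : ℤ) - n.natAbs - 1 ≤ xv Z s k A n b := by
  cases b <;> simp [xv] <;> omega

lemma Mb_ge (k : ℕ) (A : Finset ℤ) (n : ℤ) :
    3 * eB A + Z + n.natAbs + 2 ≤ Mb Z s k A n := by
  simp [Mb]

lemma run_subset_succ (k : ℕ) : (run f Z s e g k).1 ⊆ (run f Z s e g (k + 1)).1 := by
  by_cases h : (rB (run f Z s e g k).1 (e k) : ℕ∞) < f (e k)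
  · rw [run_succ_active f Z s e g h]
    exact fun a ha => Finset.mem_insert_of_mem (Finset.mem_insert_of_mem ha)
  · rw [run_succ_not f Z s e g h]

lemma run_subset {j k : ℕ} (h : j ≤ k) : (run f Z s e g j).1 ⊆ (run f Z s e g k).1 := by
  induction k with
  | zero => simp_all
  | succ k ih =>
    rcases Nat.lt_or_ge j (k+1) with h' | h'
    · exact fun a ha => run_subset_succ f Z s e g k (ih (by omega) ha)
    · have : j = k + 1 := by omega
      subst this; exact fun a ha => ha

lemma rB_mono {j k : ℕ} (h : j ≤ k) (m : ℤ) :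
    rB (run f Z s e g j).1 m ≤ rB (run f Z s e g k).1 m :=
  Finset.card_le_card (pairsF_mono (run_subset f Z s e g h) m)

lemma run_invariant (hZ : ∀ m : ℤ, f m = 0 → m.natAbs ≤ Z) :
    ∀ k m, (rB (run f Z s e g k).1 m : ℕ∞) ≤ f m := by
  intro k
  induction k with
  | zero =>
    intro m
    have : rB (∅ : Finset ℤ) m = 0 := by simp [rB, pairsF]
    simp [run, this]
  | succ k ih =>
    intro m
    by_cases h : (rB (run f Z s e g k).1 (e k) : ℕ∞) < f (e k)
    · rw [run_succ_active f Z s e g h]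
      set A := (run f Z s e g k).1 with hA
      set n := e k with hn
      set x := xv Z s k A n (g (run f Z s e g k).2) with hxd
      have hM := Mb_ge Z s k A n
      have hx1 := xv_le Z s k A n (g (run f Z s e g k).2)
      have hx2 := xv_ge Z s k A n (g (run f Z s e g k).2)
      rw [← hxd] at hx1 hx2
      by_cases hm : m = n
      · subst hm
        have := rB_insert_self hM hx1 hx2 (rfl : n - x = n - x)
        simp only [this]
        push_cast
        exact Order.add_one_le_of_lt h
      · rcases pairsF_insert_ne hM hx1 hx2 (rfl : n - x = n - x) hm with he1 | ⟨hc, hZm⟩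
        · simpa [rB, he1] using ih m
        · have hne : f m ≠ 0 := fun h0 => by have := hZ m h0; omega
          calc ((rB (insert x (insert (n - x) A)) m : ℕ) : ℕ∞) ≤ (1 : ℕ∞) := by
                exact_mod_cast hc
            _ ≤ f m := ENat.one_le_iff_ne_zero.mpr hne
    · rw [run_succ_not f Z s e g h]; exact ih m

lemma run_active_incr {k : ℕ}
    (h : (rB (run f Z s e g k).1 (e k) : ℕ∞) < f (e k)) :
    rB (run f Z s e g (k + 1)).1 (e k) = rB (run f Z s e g k).1 (e k) + 1 := by
  rw [run_succ_active f Z s e g h]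
  exact rB_insert_self (Mb_ge Z s k _ _) (xv_le Z s k _ _ _) (xv_ge Z s k _ _ _) rfl

lemma run_reach (he : ∀ (m : ℤ) (K : ℕ), ∃ k ≥ K, e k = m) :
    ∀ (j : ℕ) (m : ℤ), (j : ℕ∞) ≤ f m → ∃ K, j ≤ rB (run f Z s e g K).1 m := by
  intro j
  induction j with
  | zero => exact fun m _ => ⟨0, Nat.zero_le _⟩
  | succ j ih =>
    intro m hj
    obtain ⟨K, hK⟩ := ih m (le_trans (by exact_mod_cast Nat.le_succ j) hj)
    rcases Nat.lt_or_ge (rB (run f Z s e g K).1 m) (j + 1) with hlt | hge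
    · have hKj : rB (run f Z s e g K).1 m = j := by omega
      obtain ⟨k, hk, hek⟩ := he m K
      rcases Nat.lt_or_ge (rB (run f Z s e g k).1 m) (j + 1) with hlt' | hge'
      · have hkj : rB (run f Z s e g k).1 m = j := by
          have := rB_mono f Z s e g hk m; omega
        have hact : (rB (run f Z s e g k).1 (e k) : ℕ∞) < f (e k) := by
          rw [hek, hkj]
          exact lt_of_lt_of_le (by exact_mod_cast Nat.lt_succ_self j) hj
        refine ⟨k + 1, ?_⟩
        have := run_active_incr f Z s e g hact
        rw [hek] at this
        omega
      · exact ⟨k, hge'⟩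
    · exact ⟨K, hge⟩

lemma run_stable (hZ : ∀ m : ℤ, f m = 0 → m.natAbs ≤ Z)
    (he : ∀ (m : ℤ) (K : ℕ), ∃ k ≥ K, e k = m)
    {m : ℤ} {c : ℕ} (hc : f m = (c : ℕ∞)) :
    ∃ K, rB (run f Z s e g K).1 m = c ∧
      ∀ k, K ≤ k → pairsF (run f Z s e g k).1 m = pairsF (run f Z s e g K).1 m := by
  obtain ⟨K, hK⟩ := run_reach f Z s e g he c m (le_of_eq hc.symm)
  have hle : ∀ k, rB (run f Z s e g k).1 m ≤ c := by
    intro k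
    have := run_invariant f Z s e g hZ k m
    rw [hc] at this
    exact_mod_cast this
  have hKc : rB (run f Z s e g K).1 m = c := le_antisymm (hle K) hK
  refine ⟨K, hKc, fun k hk => ?_⟩
  refine (Finset.eq_of_subset_of_card_le (pairsF_mono (run_subset f Z s e g hk) m) ?_).symm
  have := hle k
  rw [rB] at hKc
  rw [rB] at this
  omega

lemma run_new_elt {k : ℕ} {a : ℤ} (ha : a ∈ (run f Z s e g (k + 1)).1) :
    a ∈ (run f Z s e g k).1 ∨
      (Mb Z s k (run f Z s e g k).1 (e k) ≤ a.natAbs ∧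
        ∀ c ∈ (run f Z s e g k).1, 3 * c.natAbs + 2 ≤ a.natAbs) := by
  by_cases h : (rB (run f Z s e g k).1 (e k) : ℕ∞) < f (e k)
  · rw [run_succ_active f Z s e g h] at ha
    simp only [Finset.mem_insert] at ha
    rcases ha with ha | ha | ha
    · right
      exact new_elt_bound (Mb_ge Z s k _ _) (xv_le Z s k _ _ _) (xv_ge Z s k _ _ _) rfl
        (Or.inl ha) (fun c hc => eB_le hc)
    · right
      exact new_elt_bound (Mb_ge Z s k _ _) (xv_le Z s k _ _ _) (xv_ge Z s k _ _ _) rfl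
        (Or.inr ha) (fun c hc => eB_le hc)
    · exact Or.inl ha
  · rw [run_succ_not f Z s e g h] at ha
    exact Or.inl ha

lemma run_elt_lower (hs : Monotone s) {j k : ℕ} (hjk : j ≤ k) {a : ℤ}
    (ha : a ∈ (run f Z s e g k).1) (hnot : a ∉ (run f Z s e g j).1) :
    s j ≤ a.natAbs := by
  induction k with
  | zero => exact absurd ha (by simpa [run] using hnot ∘ (by simp [run] at *; tauto))
  | succ k ih =>
    rcases Nat.lt_or_ge j (k + 1) with h' | h'
    · rcases run_new_elt f Z s e g ha with ha' | ⟨hM, _⟩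
      · exact ih (by omega) ha'
      · have : s k ≤ Mb Z s k (run f Z s e g k).1 (e k) := by simp [Mb]; omega
        have := hs (show j ≤ k by omega)
        omega
    · have : j = k + 1 := by omega
      subst this; exact absurd ha hnot

lemma run_cnt_succ (k : ℕ) :
    (run f Z s e g (k + 1)).2 = (run f Z s e g k).2 ∨
      (run f Z s e g (k + 1)).2 = (run f Z s e g k).2 + 1 := by
  by_cases h : (rB (run f Z s e g k).1 (e k) : ℕ∞) < f (e k)
  · right; rw [run_succ_active f Z s e g h]
  · left; rw [run_succ_not f Z s e g h]

lemma run_cnt_mono {j k : ℕ} (h : j ≤ k) :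
    (run f Z s e g j).2 ≤ (run f Z s e g k).2 := by
  induction k with
  | zero => simp_all
  | succ k ih =>
    rcases Nat.lt_or_ge j (k+1) with h' | h'
    · rcases run_cnt_succ f Z s e g k with h2 | h2 <;> rw [h2] <;>
        [exact ih (by omega); exact le_trans (ih (by omega)) (Nat.le_succ _)]
    · have : j = k + 1 := by omega
      subst this; exact le_refl _

lemma run_exists_active (hfin : {m : ℤ | f m = 0}.Finite)
    (he : ∀ (m : ℤ) (K : ℕ), ∃ k ≥ K, e k = m) (K : ℕ) :
    ∃ k ≥ K, (rB (run f Z s e g k).1 (e k) : ℕ∞) < f (e k) := by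
  by_contra hcon
  push_neg at hcon
  have hconst : ∀ k, K ≤ k → run f Z s e g k = run f Z s e g K := by
    intro k hk
    induction k with
    | zero => simp_all
    | succ k ih =>
      rcases Nat.lt_or_ge K (k+1) with h' | h'
      · have hik := ih (by omega)
        have hstep : ¬ (rB (run f Z s e g k).1 (e k) : ℕ∞) < f (e k) :=
          not_lt.mpr (hcon k (by omega))
        rw [run_succ_not f Z s e g hstep, hik]
      · have : K = k + 1 := by omega
        simp [this]
  set A := (run f Z s e g K).1 with hA
  have hbig : ({m : ℤ | f m = 0} ∪ {m : ℤ | m.natAbs ≤ 2 * eB A}).Finite := by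
    refine hfin.union (Set.Finite.subset (Set.finite_Icc (-(2 * eB A) : ℤ) (2 * eB A)) ?_)
    intro m hm
    simp only [Set.mem_setOf_eq] at hm
    simp only [Set.mem_Icc]
    omega
  obtain ⟨m, hm⟩ := hbig.infinite_compl.nonempty
  simp only [Set.mem_compl_iff, Set.mem_union, Set.mem_setOf_eq, not_or, not_le] at hm
  obtain ⟨k, hk, hek⟩ := he m K
  have hrm : rB (run f Z s e g k).1 m = 0 := by
    rw [hconst k hk, ← hA, rB, Finset.card_eq_zero]
    rw [Finset.eq_empty_iff_forall_notMem]
    intro p hp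
    rw [mem_pairsF] at hp
    have h1 := eB_le hp.1
    have h2 := eB_le hp.2.1
    have := hp.2.2.2
    omega
  have hcontra := hcon k hk
  rw [hek, hrm] at hcontra
  exact hm.1 (by simpa using hcontra)

lemma run_cnt_unbounded (hfin : {m : ℤ | f m = 0}.Finite)
    (he : ∀ (m : ℤ) (K : ℕ), ∃ k ≥ K, e k = m) (t : ℕ) :
    ∃ k, t ≤ (run f Z s e g k).2 := by
  induction t with
  | zero => exact ⟨0, Nat.zero_le _⟩
  | succ t ih =>
    obtain ⟨k, hk⟩ := ih
    obtain ⟨k', hk', hact⟩ := run_exists_active f Z s e g hfin he k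
    refine ⟨k' + 1, ?_⟩
    rw [run_succ_active f Z s e g hact]
    have := run_cnt_mono f Z s e g hk'
    simp only
    omega

lemma run_cnt_hit (hfin : {m : ℤ | f m = 0}.Finite)
    (he : ∀ (m : ℤ) (K : ℕ), ∃ k ≥ K, e k = m) (t : ℕ) :
    ∃ k, (run f Z s e g k).2 = t ∧ (run f Z s e g (k + 1)).2 = t + 1 := by
  obtain ⟨k0, hk0⟩ := run_cnt_unbounded f Z s e g hfin he (t + 1)
  have hex : ∃ j, t + 1 ≤ (run f Z s e g j).2 := ⟨k0, hk0⟩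
  classical
  let j0 := Nat.find hex
  have hj0 : t + 1 ≤ (run f Z s e g j0).2 := Nat.find_spec hex
  have hj0ne : j0 ≠ 0 := by
    intro h
    have := hj0
    rw [h] at this
    simp [run] at this
  obtain ⟨k, hk⟩ : ∃ k, j0 = k + 1 := ⟨j0 - 1, by omega⟩
  have hklt : ¬ t + 1 ≤ (run f Z s e g k).2 := Nat.find_min hex (by omega)
  refine ⟨k, ?_, ?_⟩
  · rcases run_cnt_succ f Z s e g k with h | h <;> rw [← hk] at * <;> omega
  · rcases run_cnt_succ f Z s e g k with h | h <;> rw [← hk] at * <;> omega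

lemma run_prefix_eq (g' : ℕ → Bool) {t : ℕ} (hgg : ∀ i < t, g i = g' i) :
    ∀ k, (run f Z s e g k).2 ≤ t → run f Z s e g k = run f Z s e g' k := by
  intro k
  induction k with
  | zero => intro _; rfl
  | succ k ih =>
    intro hk
    have hck : (run f Z s e g k).2 ≤ t := by
      rcases run_cnt_succ f Z s e g k with h | h <;> omega
    have heq := ih hck
    by_cases h : (rB (run f Z s e g k).1 (e k) : ℕ∞) < f (e k)
    · have h' : (rB (run f Z s e g' k).1 (e k) : ℕ∞) < f (e k) := by rw [← heq]; exact h
      rw [run_succ_active f Z s e g h, run_succ_active f Z s e g' h', heq]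
      have hbit : g (run f Z s e g' k).2 = g' (run f Z s e g' k).2 := by
        rw [← heq]
        apply hgg
        have : (run f Z s e g (k+1)).2 = (run f Z s e g k).2 + 1 := by
          rw [run_succ_active f Z s e g h]
        omega
      rw [hbit]
    · have h' : ¬ (rB (run f Z s e g' k).1 (e k) : ℕ∞) < f (e k) := by rw [← heq]; exact h
      rw [run_succ_not f Z s e g h, run_succ_not f Z s e g' h', heq]

lemma run_elt_growth {j k : ℕ} (hjk : j ≤ k) {a : ℤ}
    (ha : a ∈ (run f Z s e g k).1) (hnot : a ∉ (run f Z s e g j).1) :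
    ∀ c ∈ (run f Z s e g j).1, 3 * c.natAbs + 2 ≤ a.natAbs := by
  induction k with
  | zero =>
    intro c hc
    have hj0 : j = 0 := Nat.le_zero.mp hjk
    subst hj0
    exact absurd ha hnot
  | succ k ih =>
    intro c hc
    rcases Nat.lt_or_ge j (k + 1) with h' | h'
    · rcases run_new_elt f Z s e g ha with ha' | ⟨_, hgrow⟩
      · exact ih (by omega) ha' c hc
      · exact hgrow c (run_subset f Z s e g (by omega) hc)
    · have : j = k + 1 := by omega
      subst this; exact absurd ha hnot

/-- the limit set -/
def limS (f : ℤ → ℕ∞) (Z : ℕ) (s : ℕ → ℕ) (e : ℕ → ℤ) (g : ℕ → Bool) : Set ℤ :=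
  ⋃ k, ((run f Z s e g k).1 : Set ℤ)

lemma limS_pairs (m : ℤ) :
    {p : ℤ × ℤ | p.1 ∈ limS f Z s e g ∧ p.2 ∈ limS f Z s e g ∧ p.1 ≤ p.2 ∧ p.1 + p.2 = m} =
      ⋃ k, (↑(pairsF (run f Z s e g k).1 m) : Set (ℤ × ℤ)) := by
  ext p
  simp only [Set.mem_setOf_eq, Set.mem_iUnion, limS, Finset.coe_sort_coe, Finset.mem_coe,
    mem_pairsF]
  constructor
  · rintro ⟨⟨k1, h1⟩, ⟨k2, h2⟩, hle, hsum⟩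
    refine ⟨max k1 k2, run_subset f Z s e g (le_max_left _ _) (by simpa using h1),
      run_subset f Z s e g (le_max_right _ _) (by simpa using h2), hle, hsum⟩
  · rintro ⟨k, h1, h2, hle, hsum⟩
    exact ⟨⟨k, by simpa using h1⟩, ⟨k, by simpa using h2⟩, hle, hsum⟩

lemma limS_repFn (hZ : ∀ m : ℤ, f m = 0 → m.natAbs ≤ Z)
    (he : ∀ (m : ℤ) (K : ℕ), ∃ k ≥ K, e k = m) (m : ℤ) :
    repFn (limS f Z s e g) m = f m := by
  rw [repFn, limS_pairs]
  cases hc : f m with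
  | top =>
    have : ∀ j : ℕ, (j : ℕ∞) ≤ (⋃ k, (↑(pairsF (run f Z s e g k).1 m) : Set (ℤ × ℤ))).encard := by
      intro j
      obtain ⟨K, hK⟩ := run_reach f Z s e g he j m (hc ▸ le_top)
      calc (j : ℕ∞) ≤ (rB (run f Z s e g K).1 m : ℕ∞) := by exact_mod_cast hK
        _ = (↑(pairsF (run f Z s e g K).1 m) : Set (ℤ × ℤ)).encard := by
            rw [Set.encard_coe_eq_coe_finsetCard]; rfl
        _ ≤ _ := Set.encard_mono
            (Set.subset_iUnion (fun k => (↑(pairsF (run f Z s e g k).1 m) : Set (ℤ × ℤ))) K)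
    cases henc : (⋃ k, (↑(pairsF (run f Z s e g k).1 m) : Set (ℤ × ℤ))).encard with
    | top => rfl
    | coe c =>
      have := this (c + 1)
      rw [henc] at this
      exact absurd this (by exact_mod_cast by omega)
  | coe c =>
    obtain ⟨K, hKc, hKstab⟩ := run_stable f Z s e g hZ he hc
    have hun : (⋃ k, (↑(pairsF (run f Z s e g k).1 m) : Set (ℤ × ℤ))) =
        ↑(pairsF (run f Z s e g K).1 m) := by
      apply Set.Subset.antisymm
      · refine Set.iUnion_subset fun k => ?_
        rcases le_or_gt k K with h | h
        · exact_mod_cast pairsF_mono (run_subset f Z s e g h) m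
        · rw [hKstab k (by omega)]
      · exact Set.subset_iUnion (fun k => (↑(pairsF (run f Z s e g k).1 m) : Set (ℤ × ℤ))) K
    rw [hun, Set.encard_coe_eq_coe_finsetCard]
    rw [show (pairsF (run f Z s e g K).1 m).card = c from hKc]

lemma run_card (k : ℕ) : (run f Z s e g k).1.card ≤ 2 * k := by
  induction k with
  | zero => simp [run]
  | succ k ih =>
    by_cases h : (rB (run f Z s e g k).1 (e k) : ℕ∞) < f (e k)
    · rw [run_succ_active f Z s e g h]
      calc (insert _ (insert _ (run f Z s e g k).1)).card
          ≤ (insert _ (run f Z s e g k).1).card + 1 := Finset.card_insert_le _ _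
        _ ≤ (run f Z s e g k).1.card + 1 + 1 := by
            have := Finset.card_insert_le (e k - xv Z s k (run f Z s e g k).1 (e k)
              (g (run f Z s e g k).2)) (run f Z s e g k).1
            omega
        _ ≤ 2 * (k + 1) := by omega
    · rw [run_succ_not f Z s e g h]; omega

lemma limS_count (hs : Monotone s) (hsl : ∀ j, j ≤ s j)
    (φ : ℕ → ℝ) (hφ0 : ∀ x, 0 ≤ φ x)
    (hsp : ∀ j y, s j ≤ y → (2 * j + 2 : ℝ) ≤ φ y) (x : ℕ) :
    (countFn (limS f Z s e g) (-(x : ℝ)) (x : ℝ) : ℝ) ≤ φ x := by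
  rw [countFn]
  by_cases h0 : s 0 ≤ x
  · classical
    set J := Nat.findGreatest (fun j => s j ≤ x) x with hJ
    have hJ1 : s J ≤ x := by
      rw [hJ]
      exact Nat.findGreatest_spec (P := fun j => s j ≤ x) (m := 0) (Nat.zero_le x) h0
    have hJ2 : ¬ s (J + 1) ≤ x := by
      rcases le_or_gt (J + 1) x with h | h
      · exact Nat.findGreatest_is_greatest (P := fun j => s j ≤ x) (n := x)
          (by rw [← hJ]; omega) h
      · have := hsl (J + 1); omega
    have hsub : {a : ℤ | a ∈ limS f Z s e g ∧ -(x : ℝ) ≤ (a : ℝ) ∧ (a : ℝ) ≤ x} ⊆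
        ((run f Z s e g (J + 1)).1 : Set ℤ) := by
      rintro a ⟨⟨_, ⟨k, rfl⟩, hak⟩, hge, hle⟩
      simp only [Finset.mem_coe] at hak ⊢
      by_contra hnot
      rcases le_or_gt k (J + 1) with h | h
      · exact hnot (run_subset f Z s e g h hak)
      · have := run_elt_lower f Z s e g hs (by omega : J + 1 ≤ k) hak hnot
        have hax : a.natAbs ≤ x := by
          have h1 : (a : ℝ) ≤ (x : ℝ) := hle
          have h2 : -(x : ℝ) ≤ (a : ℝ) := hge
          have h1' : a ≤ (x : ℤ) := by exact_mod_cast h1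
          have h2' : -(x : ℤ) ≤ a := by exact_mod_cast h2
          omega
        omega
    have hcard : {a : ℤ | a ∈ limS f Z s e g ∧ -(x : ℝ) ≤ (a : ℝ) ∧ (a : ℝ) ≤ x}.ncard ≤
        2 * (J + 1) := by
      calc _ ≤ ((run f Z s e g (J + 1)).1 : Set ℤ).ncard :=
            Set.ncard_le_ncard hsub (Set.toFinite _)
        _ = (run f Z s e g (J + 1)).1.card := Set.ncard_coe_finset _
        _ ≤ 2 * (J + 1) := run_card f Z s e g (J + 1)
    calc ({a : ℤ | a ∈ limS f Z s e g ∧ -(x : ℝ) ≤ (a : ℝ) ∧ (a : ℝ) ≤ x}.ncard : ℝ)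
        ≤ (2 * (J + 1) : ℝ) := by exact_mod_cast hcard
      _ = 2 * J + 2 := by ring
      _ ≤ φ x := hsp J x hJ1
  · have hsub : {a : ℤ | a ∈ limS f Z s e g ∧ -(x : ℝ) ≤ (a : ℝ) ∧ (a : ℝ) ≤ x} = ∅ := by
      rw [Set.eq_empty_iff_forall_notMem]
      rintro a ⟨⟨_, ⟨k, rfl⟩, hak⟩, hge, hle⟩
      simp only [Finset.mem_coe] at hak
      have hnot : a ∉ (run f Z s e g 0).1 := by simp [run]
      have := run_elt_lower f Z s e g hs (Nat.zero_le k) hak hnot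
      have h1' : a ≤ (x : ℤ) := by exact_mod_cast hle
      have h2' : -(x : ℤ) ≤ a := by exact_mod_cast hge
      omega
    rw [hsub]
    simpa using hφ0 x

lemma xv_natAbs_le (k : ℕ) (A : Finset ℤ) (n : ℤ) (b : Bool) :
    (xv Z s k A n b).natAbs ≤ Mb Z s k A n + n.natAbs + 1 := by
  have h1 := xv_le Z s k A n b
  have h2 := xv_ge Z s k A n b
  omega

lemma xv_natAbs_ge (k : ℕ) (A : Finset ℤ) (n : ℤ) (b : Bool) :
    Mb Z s k A n + n.natAbs ≤ (xv Z s k A n b).natAbs := by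
  have h1 := xv_le Z s k A n b
  have h2 := xv_ge Z s k A n b
  omega

lemma limS_inj (hfin : {m : ℤ | f m = 0}.Finite)
    (he : ∀ (m : ℤ) (K : ℕ), ∃ k ≥ K, e k = m)
    {g' : ℕ → Bool} (hgg' : g ≠ g') : limS f Z s e g ≠ limS f Z s e g' := by
  classical
  have hne : ∃ i, g i ≠ g' i := Function.ne_iff.mp hgg'
  set t := Nat.find hne with ht
  have htne : g t ≠ g' t := Nat.find_spec hne
  have hgg : ∀ i < t, g i = g' i := fun i hi => not_not.mp (Nat.find_min hne hi)
  obtain ⟨k, hc1, hc2⟩ := run_cnt_hit f Z s e g hfin he t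
  have hact : (rB (run f Z s e g k).1 (e k) : ℕ∞) < f (e k) := by
    by_contra h
    rw [run_succ_not f Z s e g h] at hc2
    omega
  have heq : run f Z s e g k = run f Z s e g' k :=
    run_prefix_eq f Z s e g g' hgg k (le_of_eq hc1)
  have hact' : (rB (run f Z s e g' k).1 (e k) : ℕ∞) < f (e k) := by rw [← heq]; exact hact
  set A := (run f Z s e g k).1 with hA
  set n := e k with hn
  set x := xv Z s k A n (g t) with hx
  set x' := xv Z s k A n (g' t) with hx'
  have hrun1 : run f Z s e g (k + 1) = (insert x (insert (n - x) A), t + 1) := by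
    rw [run_succ_active f Z s e g hact, hc1, ← hA, ← hn, ← hx]
  have hrun2 : run f Z s e g' (k + 1) = (insert x' (insert (n - x') A), t + 1) := by
    have hc1' : (run f Z s e g' k).2 = t := by rw [← heq]; exact hc1
    rw [run_succ_active f Z s e g' hact', hc1', ← heq, ← hA, ← hn, ← hx']
  have hMge := Mb_ge Z s k A n
  have hxx' : x ≠ x' := by
    rw [hx, hx']
    cases hgt : g t <;> cases hgt' : g' t <;> simp_all [xv] <;> omega
  have hxmem : x ∈ limS f Z s e g := by
    rw [limS]
    exact Set.mem_iUnion.mpr ⟨k + 1, by rw [hrun1]; simp⟩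
  have hxnot : x ∉ limS f Z s e g' := by
    rw [limS]
    rw [Set.mem_iUnion]
    rintro ⟨k', hk'⟩
    simp only [Finset.mem_coe] at hk'
    have hx1 := xv_le Z s k A n (g t)
    have hx2 := xv_ge Z s k A n (g t)
    have hx1' := xv_le Z s k A n (g' t)
    have hx2' := xv_ge Z s k A n (g' t)
    rw [← hx] at hx1 hx2
    rw [← hx'] at hx1' hx2'
    have hxin : x ∉ (run f Z s e g' (k + 1)).1 := by
      rw [hrun2]
      simp only [Finset.mem_insert]
      rintro (h | h | h)
      · exact hxx' h
      · omega
      · have := eB_le h; omega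
    rcases le_or_gt k' (k + 1) with h | h
    · exact hxin (run_subset f Z s e g' h hk')
    · have hgrow := run_elt_growth f Z s e g' (by omega : k + 1 ≤ k') hk' hxin x'
        (by rw [hrun2]; simp)
      omega
  intro hlim
  rw [hlim] at hxmem
  exact hxnot hxmem

theorem stmt_5 (f : ℤ → ℕ∞) (hf : {n : ℤ | f n = 0}.Finite)
    (φ : ℕ → ℝ) (hφ0 : ∀ x, 0 ≤ φ x)
    (hφ : Filter.Tendsto φ Filter.atTop Filter.atTop) :
    ¬ {A : Set ℤ |
        {n : ℤ | ¬ 1 ≤ repFn A n}.Finite ∧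
        (∀ n : ℤ, repFn A n = f n) ∧
        (∀ x : ℕ, (countFn A (-(x : ℝ)) (x : ℝ) : ℝ) ≤ φ x)}.Countable := by
  classical
  intro hcount
  -- bound on the zero set of f
  set Z : ℕ := hf.toFinset.sup Int.natAbs with hZdef
  have hZ : ∀ m : ℤ, f m = 0 → m.natAbs ≤ Z := fun m hm =>
    Finset.le_sup (hf.mem_toFinset.mpr hm)
  -- the enumeration of targets
  set e : ℕ → ℤ := fun k => Denumerable.ofNat ℤ (Nat.unpair k).2 with hedef
  have he : ∀ (m : ℤ) (K : ℕ), ∃ k ≥ K, e k = m := by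
    intro m K
    refine ⟨Nat.pair K (Encodable.encode m), Nat.left_le_pair _ _, ?_⟩
    simp only [hedef, Nat.unpair_pair]
    exact Denumerable.ofNat_encode m
  -- thresholds from φ
  have hth : ∀ j : ℕ, ∃ N : ℕ, ∀ y ≥ N, (2 * j + 2 : ℝ) ≤ φ y := fun j =>
    Filter.eventually_atTop.mp (hφ.eventually_ge_atTop (2 * j + 2 : ℝ))
  choose t ht using hth
  set s : ℕ → ℕ := fun j => j + (Finset.range (j + 1)).sup t with hsdef
  have hsmono : Monotone s := by
    intro i j hij
    simp only [hsdef]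
    have : (Finset.range (i + 1)).sup t ≤ (Finset.range (j + 1)).sup t :=
      Finset.sup_mono (Finset.range_subset_range.mpr (by omega))
    omega
  have hsl : ∀ j, j ≤ s j := fun j => by simp [hsdef]
  have hsp : ∀ j y, s j ≤ y → (2 * j + 2 : ℝ) ≤ φ y := by
    intro j y hy
    apply ht j
    have : t j ≤ (Finset.range (j + 1)).sup t :=
      Finset.le_sup (Finset.mem_range.mpr (by omega))
    simp only [hsdef] at hy
    omega
  -- each limit set belongs to the target collection
  have hmem : ∀ g : ℕ → Bool, limS f Z s e g ∈
      {A : Set ℤ |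
        {n : ℤ | ¬ 1 ≤ repFn A n}.Finite ∧
        (∀ n : ℤ, repFn A n = f n) ∧
        (∀ x : ℕ, (countFn A (-(x : ℝ)) (x : ℝ) : ℝ) ≤ φ x)} := by
    intro g
    refine ⟨?_, fun n => limS_repFn f Z s e g hZ he n,
      fun x => limS_count f Z s e g hsmono hsl φ hφ0 hsp x⟩
    refine hf.subset ?_
    intro n hn
    simp only [Set.mem_setOf_eq] at hn ⊢
    rw [limS_repFn f Z s e g hZ he n, ENat.one_le_iff_ne_zero] at hn
    exact not_not.mp hn
  -- injectivity of g ↦ limS g gives uncountability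
  have hCnt : Countable
      {A : Set ℤ //
        A ∈ {A : Set ℤ |
          {n : ℤ | ¬ 1 ≤ repFn A n}.Finite ∧
          (∀ n : ℤ, repFn A n = f n) ∧
          (∀ x : ℕ, (countFn A (-(x : ℝ)) (x : ℝ) : ℝ) ≤ φ x)}} :=
    Set.countable_coe_iff.mpr hcount
  have hinj : Function.Injective (fun g : ℕ → Bool =>
      (⟨limS f Z s e g, hmem g⟩ :
        {A : Set ℤ //
          A ∈ {A : Set ℤ |
            {n : ℤ | ¬ 1 ≤ repFn A n}.Finite ∧
            (∀ n : ℤ, repFn A n = f n) ∧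
            (∀ x : ℕ, (countFn A (-(x : ℝ)) (x : ℝ) : ℝ) ≤ φ x)}})) := by
    intro g g' h
    by_contra hne
    exact limS_inj f Z s e g hf he hne (congrArg Subtype.val h)
  have hBoolCnt : Countable (ℕ → Bool) := hinj.countable
  obtain ⟨u, hu⟩ := (countable_iff_exists_injective (ℕ → Bool)).mp hBoolCnt
  have hv : Function.Injective (fun (S : Set ℕ) (n : ℕ) => decide (n ∈ S)) := by
    intro S S' hSS'
    ext n
    have := congrFun hSS' n
    simpa using this
  exact Function.cantor_injective (u ∘ fun (S : Set ℕ) (n : ℕ) => decide (n ∈ S))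
    (hu.comp hv)
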